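/- For every x ∈ 𝒳, the penalized value function converges pointwise to the constrained value function: lim_{ρ→∞} F_ρ(x) = Φ(x). -/

import Mathlib

open Set Filter Topology

set_option maxHeartbeats 1000000

/-- Lemma 3.2 (consistency of the penalty): for every `x ∈ 𝒳`,
`F_ρ(x) → Φ(x)` as `ρ → ∞`. -/
theorem penalized_value_function_tendsto
    {dx dy dl : ℕ}
    (Xset : Set (EuclideanSpace ℝ (Fin dx)))
    (Yset : Set (EuclideanSpace ℝ (Fin dy)))
    (Lam : Set (EuclideanSpace ℝ (Fin dl)))
    (hXne : Xset.Nonempty) (hXcv : Convex ℝ Xset) (hXcp : IsCompact Xset)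
    (hYne : Yset.Nonempty) (hYcv : Convex ℝ Yset) (hYcp : IsCompact Yset)
    (hLne : Lam.Nonempty) (hLcv : Convex ℝ Lam) (hLcp : IsCompact Lam)
    (fbar : EuclideanSpace ℝ (Fin dx) → EuclideanSpace ℝ (Fin dy) → ℝ)
    (Lfbar : ℝ)
    (hfbarC1 : ContDiff ℝ 1
      (fun p : EuclideanSpace ℝ (Fin dx) × EuclideanSpace ℝ (Fin dy) => fbar p.1 p.2))
    (hfbarLip : ∀ x x' y y',
      ‖gradient (fun x0 => fbar x0 y) x - gradient (fun x0 => fbar x0 y') x'‖ ^ 2 +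
        ‖gradient (fun y0 => fbar x y0) y - gradient (fun y0 => fbar x' y0) y'‖ ^ 2 ≤
        Lfbar ^ 2 * (‖x - x'‖ ^ 2 + ‖y - y'‖ ^ 2))
    (A : Matrix (Fin dl) (Fin dx) ℝ) (B : Matrix (Fin dl) (Fin dy) ℝ)
    (cvec : EuclideanSpace ℝ (Fin dl))
    (f : EuclideanSpace ℝ (Fin dx) → EuclideanSpace ℝ (Fin dy) →
      EuclideanSpace ℝ (Fin dl) → ℝ)
    (hfdef : ∀ x y l, f x y l =
      fbar x y + ∑ i, l i * (A.mulVec (fun j => x j) i + B.mulVec (fun j => y j) i - cvec i))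
    (g : EuclideanSpace ℝ (Fin dy) → EuclideanSpace ℝ (Fin dl) → ℝ)
    (Lg : ℝ)
    (hgC1 : ContDiff ℝ 1
      (fun p : EuclideanSpace ℝ (Fin dy) × EuclideanSpace ℝ (Fin dl) => g p.1 p.2))
    (hgLip : ∀ y y' l l',
      ‖gradient (fun y0 => g y0 l) y - gradient (fun y0 => g y0 l') y'‖ ^ 2 +
        ‖gradient (fun l0 => g y l0) l - gradient (fun l0 => g y' l0) l'‖ ^ 2 ≤
        Lg ^ 2 * (‖y - y'‖ ^ 2 + ‖l - l'‖ ^ 2))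
    (hgconv : ∀ l ∈ Lam, ConvexOn ℝ univ (fun y => g y l))
    -- the value function of the lower level, the penalized value function `F_ρ`,
    -- and the constrained value function `Φ`
    (vg : EuclideanSpace ℝ (Fin dl) → ℝ)
    (hvg : ∀ l, vg l = sInf ((fun z => g z l) '' Yset))
    (hg : EuclideanSpace ℝ (Fin dy) → EuclideanSpace ℝ (Fin dl) → ℝ)
    (hhg : ∀ y l, hg y l = g y l - vg l)
    (F : ℝ → EuclideanSpace ℝ (Fin dx) → ℝ)
    (hF : ∀ ρ x, F ρ x = sSup
      ((fun p : EuclideanSpace ℝ (Fin dy) × EuclideanSpace ℝ (Fin dl) =>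
        f x p.1 p.2 - ρ * hg p.1 p.2) '' (Yset ×ˢ Lam)))
    (Φ : EuclideanSpace ℝ (Fin dx) → ℝ)
    (hΦ : ∀ x, Φ x = sSup
      ((fun p : EuclideanSpace ℝ (Fin dy) × EuclideanSpace ℝ (Fin dl) =>
        f x p.1 p.2) '' {p ∈ Yset ×ˢ Lam | hg p.1 p.2 = 0})) :
    ∀ x ∈ Xset, Tendsto (fun ρ : ℝ => F ρ x) atTop (𝓝 (Φ x)) := by

  intro x hx
  -- basic compactness / nonemptiness
  have hKcp : IsCompact (Yset ×ˢ Lam) := hYcp.prod hLcp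
  have hKne : (Yset ×ˢ Lam).Nonempty := hYne.prod hLne
  -- continuity of g and of f x
  have hgcont : Continuous (fun p : EuclideanSpace ℝ (Fin dy) × EuclideanSpace ℝ (Fin dl) =>
      g p.1 p.2) := hgC1.continuous
  have hgcont1 : ∀ l, Continuous (fun z => g z l) := fun l =>
    hgcont.comp (continuous_id.prodMk continuous_const)
  have hfxcont : Continuous (fun p : EuclideanSpace ℝ (Fin dy) × EuclideanSpace ℝ (Fin dl) =>
      f x p.1 p.2) := by
    have h1 : Continuous (fun p : EuclideanSpace ℝ (Fin dy) × EuclideanSpace ℝ (Fin dl) =>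
        fbar x p.1) := hfbarC1.continuous.comp (continuous_const.prodMk continuous_fst)
    have h2 : Continuous (fun p : EuclideanSpace ℝ (Fin dy) × EuclideanSpace ℝ (Fin dl) =>
        ∑ i, p.2 i * (A.mulVec (fun j => x j) i + B.mulVec (fun j => p.1 j) i - cvec i)) := by
      apply continuous_finset_sum
      intro i _
      apply Continuous.mul
      · exact (PiLp.continuous_apply 2 _ i).comp continuous_snd
      · apply Continuous.sub _ continuous_const
        apply Continuous.add continuous_const
        simp only [Matrix.mulVec, dotProduct]
        apply continuous_finset_sum
        intro j _
        exact continuous_const.mul ((PiLp.continuous_apply 2 _ j).comp continuous_fst)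
    have := h1.add h2
    exact this.congr (fun p => (hfdef x p.1 p.2).symm)
  -- the lower-level minimum is attained
  have hmin : ∀ l, ∃ z ∈ Yset, IsMinOn (fun z => g z l) Yset z :=
    fun l => hYcp.exists_isMinOn hYne (hgcont1 l).continuousOn
  have hvg_le : ∀ l, ∀ z ∈ Yset, vg l ≤ g z l := by
    intro l z hz
    obtain ⟨w, hw, hmw⟩ := hmin l
    rw [hvg]
    exact csInf_le ⟨g w l, by rintro _ ⟨u, hu, rfl⟩; exact isMinOn_iff.mp hmw u hu⟩ ⟨z, hz, rfl⟩
  have hvg_mem : ∀ l, ∃ z ∈ Yset, vg l = g z l := by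
    intro l
    obtain ⟨w, hw, hmw⟩ := hmin l
    refine ⟨w, hw, le_antisymm (hvg_le l w hw) ?_⟩
    rw [hvg]
    exact le_csInf ⟨g w l, ⟨w, hw, rfl⟩⟩ (by rintro _ ⟨u, hu, rfl⟩; exact isMinOn_iff.mp hmw u hu)
  -- continuity of vg
  have hvgcont : Continuous vg := by
    rw [Metric.continuous_iff]
    intro l0 ε hε
    have hCcp : IsCompact (Yset ×ˢ Metric.closedBall l0 1) :=
      hYcp.prod (isCompact_closedBall l0 1)
    have hUC := hCcp.uniformContinuousOn_of_continuous hgcont.continuousOn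
    rw [Metric.uniformContinuousOn_iff] at hUC
    obtain ⟨δ, hδ, hδ'⟩ := hUC (ε / 2) (by linarith)
    refine ⟨min δ 1, by positivity, fun l hl => ?_⟩
    have hl1 : l ∈ Metric.closedBall l0 1 :=
      Metric.mem_closedBall.2 (le_of_lt (lt_of_lt_of_le hl (min_le_right _ _)))
    have hl0 : l0 ∈ Metric.closedBall l0 1 := Metric.mem_closedBall_self zero_le_one
    have hld : dist l l0 < δ := lt_of_lt_of_le hl (min_le_left _ _)
    have key : ∀ l1 l2, l1 ∈ Metric.closedBall l0 1 → l2 ∈ Metric.closedBall l0 1 →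
        dist l1 l2 < δ → vg l1 ≤ vg l2 + ε / 2 := by
      intro l1 l2 h1 h2 hd
      obtain ⟨z, hz, hze⟩ := hvg_mem l2
      have hdp : dist ((z, l1) : EuclideanSpace ℝ (Fin dy) × EuclideanSpace ℝ (Fin dl))
          (z, l2) < δ := by
        rw [Prod.dist_eq]
        exact max_lt (by simp [hδ]) hd
      have hdg := hδ' (z, l1) (mem_prod.mpr ⟨hz, h1⟩) (z, l2) (mem_prod.mpr ⟨hz, h2⟩) hdp
      rw [Real.dist_eq] at hdg
      have h3 : g z l1 ≤ g z l2 + ε / 2 := by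
        have := abs_sub_lt_iff.mp hdg
        linarith [this.1]
      calc vg l1 ≤ g z l1 := hvg_le l1 z hz
        _ ≤ g z l2 + ε / 2 := h3
        _ = vg l2 + ε / 2 := by rw [hze]
    have h1 := key l l0 hl1 hl0 hld
    have h2 := key l0 l hl0 hl1 (by rwa [dist_comm])
    rw [Real.dist_eq]
    rw [abs_sub_lt_iff]
    constructor <;> linarith
  -- continuity and nonnegativity of hg
  have hhgcont : Continuous (fun p : EuclideanSpace ℝ (Fin dy) × EuclideanSpace ℝ (Fin dl) =>
      hg p.1 p.2) := by
    have : Continuous (fun p : EuclideanSpace ℝ (Fin dy) × EuclideanSpace ℝ (Fin dl) =>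
        g p.1 p.2 - vg p.2) := hgcont.sub (hvgcont.comp continuous_snd)
    simpa only [← hhg] using this
  have hhgnn : ∀ p : EuclideanSpace ℝ (Fin dy) × EuclideanSpace ℝ (Fin dl),
      p ∈ Yset ×ˢ Lam → 0 ≤ hg p.1 p.2 := by
    intro p hp
    rw [hhg]
    have := hvg_le p.2 p.1 (mem_prod.1 hp).1
    linarith
  -- the penalized objective and basic sSup facts
  set Ψ : ℝ → EuclideanSpace ℝ (Fin dy) × EuclideanSpace ℝ (Fin dl) → ℝ :=
    fun ρ p => f x p.1 p.2 - ρ * hg p.1 p.2 with hΨ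
  have hΨcont : ∀ ρ, Continuous (Ψ ρ) := fun ρ =>
    hfxcont.sub (continuous_const.mul hhgcont)
  have hbddΨ : ∀ ρ, BddAbove (Ψ ρ '' (Yset ×ˢ Lam)) := fun ρ =>
    (hKcp.image (hΨcont ρ)).bddAbove
  have hbddf : BddAbove ((fun p : EuclideanSpace ℝ (Fin dy) × EuclideanSpace ℝ (Fin dl) =>
      f x p.1 p.2) '' (Yset ×ˢ Lam)) := (hKcp.image hfxcont).bddAbove
  set M : ℝ := sSup ((fun p : EuclideanSpace ℝ (Fin dy) × EuclideanSpace ℝ (Fin dl) =>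
      f x p.1 p.2) '' (Yset ×ˢ Lam)) with hM
  have hfleM : ∀ p ∈ Yset ×ˢ Lam, f x p.1 p.2 ≤ M := fun p hp =>
    le_csSup hbddf ⟨p, hp, rfl⟩
  -- the feasible set is nonempty
  have hFene : ∃ p : EuclideanSpace ℝ (Fin dy) × EuclideanSpace ℝ (Fin dl),
      p ∈ Yset ×ˢ Lam ∧ hg p.1 p.2 = 0 := by
    obtain ⟨l, hl⟩ := hLne
    obtain ⟨z, hz, hze⟩ := hvg_mem l
    exact ⟨(z, l), mem_prod.2 ⟨hz, hl⟩, by rw [hhg]; rw [hze]; ring⟩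
  -- every feasible point's value is at most Φ x, and Φ x bounds below every F ρ x
  have hbddfFe : BddAbove ((fun p : EuclideanSpace ℝ (Fin dy) × EuclideanSpace ℝ (Fin dl) =>
      f x p.1 p.2) '' {p ∈ Yset ×ˢ Lam | hg p.1 p.2 = 0}) :=
    hbddf.mono (image_mono (sep_subset _ _))
  have hfleΦ : ∀ p : EuclideanSpace ℝ (Fin dy) × EuclideanSpace ℝ (Fin dl),
      p ∈ Yset ×ˢ Lam → hg p.1 p.2 = 0 → f x p.1 p.2 ≤ Φ x := by
    intro p hp h0
    rw [hΦ]
    exact le_csSup hbddfFe ⟨p, ⟨hp, h0⟩, rfl⟩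
  have hΦleF : ∀ ρ : ℝ, Φ x ≤ F ρ x := by
    intro ρ
    rw [hΦ, hF]
    obtain ⟨p0, hp0K, hp00⟩ := hFene
    have hne : ((fun p : EuclideanSpace ℝ (Fin dy) × EuclideanSpace ℝ (Fin dl) =>
        f x p.1 p.2) '' {p ∈ Yset ×ˢ Lam | hg p.1 p.2 = 0}).Nonempty :=
      ⟨_, ⟨p0, ⟨hp0K, hp00⟩, rfl⟩⟩
    apply csSup_le hne
    rintro _ ⟨p, ⟨hpK, hp0⟩, rfl⟩
    show f x p.1 p.2 ≤ _
    have heq : f x p.1 p.2 = Ψ ρ p := by rw [hΨ]; simp [hp0]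
    rw [heq]
    exact le_csSup (hbddΨ ρ) ⟨p, hpK, rfl⟩
  -- F · x is antitone
  have hanti : Antitone (fun ρ : ℝ => F ρ x) := by
    intro ρ ρ' hle
    simp only
    rw [hF, hF]
    apply csSup_le (hKne.image _)
    rintro _ ⟨p, hp, rfl⟩
    have h1 : f x p.1 p.2 - ρ' * hg p.1 p.2 ≤ Ψ ρ p := by
      have := hhgnn p hp
      have : ρ * hg p.1 p.2 ≤ ρ' * hg p.1 p.2 := mul_le_mul_of_nonneg_right hle this
      rw [hΨ]; simp only; linarith
    exact h1.trans (le_csSup (hbddΨ ρ) ⟨p, hp, rfl⟩)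
  have hbddbelow : BddBelow (range fun ρ : ℝ => F ρ x) := by
    refine ⟨Φ x, ?_⟩
    rintro _ ⟨ρ, rfl⟩
    exact hΦleF ρ
  have htend : Tendsto (fun ρ : ℝ => F ρ x) atTop (𝓝 (⨅ ρ : ℝ, F ρ x)) :=
    tendsto_atTop_ciInf hanti hbddbelow
  -- it remains to identify the limit with Φ x
  have hLgeΦ : Φ x ≤ ⨅ ρ : ℝ, F ρ x := le_ciInf hΦleF
  set L : ℝ := ⨅ ρ : ℝ, F ρ x with hLdef
  have hLleF : ∀ ρ : ℝ, L ≤ F ρ x := fun ρ => ciInf_le hbddbelow ρ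
  have hLleΦ : L ≤ Φ x := by
    by_contra hcon
    push_neg at hcon
    -- L ≤ M
    have hF0M : F (0 : ℝ) x ≤ M := by
      rw [hF]
      apply csSup_le (hKne.image _)
      rintro _ ⟨p, hp, rfl⟩
      have := hfleM p hp
      simp only
      linarith
    have hLM : L ≤ M := (hLleF 0).trans hF0M
    set c : ℝ := M - L with hc
    have hcnn : 0 ≤ c := by simp [hc]; linarith
    set D : ℕ → Set (EuclideanSpace ℝ (Fin dy) × EuclideanSpace ℝ (Fin dl)) :=
      fun n => (Yset ×ˢ Lam) ∩ {p | L ≤ f x p.1 p.2} ∩ {p | hg p.1 p.2 ≤ c / ((n : ℝ) + 1)}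
      with hD
    have hDclosed : ∀ n, IsClosed (D n) := by
      intro n
      exact ((hKcp.isClosed.inter (isClosed_le continuous_const hfxcont)).inter
        (isClosed_le hhgcont continuous_const))
    have hDsub : ∀ n, D n ⊆ Yset ×ˢ Lam := fun n =>
      (inter_subset_left.trans inter_subset_left)
    have hDne : ∀ n, (D n).Nonempty := by
      intro n
      set ρ : ℝ := (n : ℝ) + 1 with hρ
      have hρpos : 0 < ρ := by positivity
      obtain ⟨p, hpK, hpmax⟩ := hKcp.exists_isMaxOn hKne (hΨcont ρ).continuousOn
      have hFeq : F ρ x = Ψ ρ p := by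
        rw [hF]
        exact IsGreatest.csSup_eq ⟨⟨p, hpK, rfl⟩, by
          rintro _ ⟨q, hq, rfl⟩; exact isMaxOn_iff.mp hpmax q hq⟩
      have hLΨ : L ≤ Ψ ρ p := by rw [← hFeq]; exact hLleF ρ
      have hnn := hhgnn p hpK
      have hfM := hfleM p hpK
      have hΨle : Ψ ρ p = f x p.1 p.2 - ρ * hg p.1 p.2 := rfl
      refine ⟨p, ⟨⟨hpK, ?_⟩, ?_⟩⟩
      · show L ≤ f x p.1 p.2
        nlinarith
      · show hg p.1 p.2 ≤ c / ((n : ℝ) + 1)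
        rw [le_div_iff₀ hρpos]
        have : ρ * hg p.1 p.2 = f x p.1 p.2 - Ψ ρ p := by rw [hΨle]; ring
        rw [hc]
        nlinarith
    have hDdec : ∀ n, D (n + 1) ⊆ D n := by
      intro n p hp
      refine ⟨hp.1, ?_⟩
      have h2 := hp.2
      simp only [mem_setOf_eq] at h2 ⊢
      have : c / ((n : ℝ) + 1 + 1) ≤ c / ((n : ℝ) + 1) := by
        apply div_le_div_of_nonneg_left hcnn (by positivity) ?_ |>.trans_eq rfl
        · linarith
      push_cast at h2
      linarith
    obtain ⟨p, hp⟩ := IsCompact.nonempty_iInter_of_sequence_nonempty_isCompact_isClosed D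
      hDdec hDne (hKcp.of_isClosed_subset (hDclosed 0) (hDsub 0)) hDclosed
    have hpall : ∀ n : ℕ, p ∈ D n := by
      simpa [mem_iInter] using hp
    have hpK : p ∈ Yset ×ˢ Lam := (hpall 0).1.1
    have hpf : L ≤ f x p.1 p.2 := (hpall 0).1.2
    have hple : ∀ n : ℕ, hg p.1 p.2 ≤ c / ((n : ℝ) + 1) := fun n => (hpall n).2
    have htend0 : Tendsto (fun n : ℕ => c / ((n : ℝ) + 1)) atTop (𝓝 0) := by
      have := tendsto_one_div_add_atTop_nhds_zero_nat.const_mul c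
      simpa [div_eq_mul_inv, mul_comm] using this
    have hle0 : hg p.1 p.2 ≤ 0 := ge_of_tendsto' htend0 hple
    have h0 : hg p.1 p.2 = 0 := le_antisymm hle0 (hhgnn p hpK)
    have := hfleΦ p hpK h0
    linarith
  have hLΦ : L = Φ x := le_antisymm hLleΦ hLgeΦ
  rw [← hLΦ]
  exact htend
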